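/- Let A₀, A₁ be symmetric n×n matrices such that A₀ has at least one positive eigenvalue and exactly one negative eigenvalue, there exists x̄ with x̄ᵀA₀x̄ < 0 and x̄ᵀA₁x̄ < 0, A₀ is singular, and A₁ is positive definite on Null(A₀). Then for all sufficiently small ε > 0, the matrix A_ε := (1−ε)A₀ + εA₁ is invertible with exactly one negative eigenvalue. -/

import Mathlib

open Matrix

section aux

lemma sum_dot' {n : ℕ} {ι : Type*} (s : Finset ι) (f : ι → (Fin n → ℝ)) (y : Fin n → ℝ) :
    (∑ i ∈ s, f i) ⬝ᵥ y = ∑ i ∈ s, f i ⬝ᵥ y := by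
  simp [dotProduct, Finset.sum_mul, Finset.sum_apply]
  exact Finset.sum_comm

lemma dot_sum' {n : ℕ} {ι : Type*} (s : Finset ι) (f : ι → (Fin n → ℝ)) (y : Fin n → ℝ) :
    y ⬝ᵥ (∑ i ∈ s, f i) = ∑ i ∈ s, y ⬝ᵥ f i := by
  simp [dotProduct, Finset.mul_sum, Finset.sum_apply]
  exact Finset.sum_comm

lemma dot_expand' {n : ℕ} (V : Fin n → (Fin n → ℝ))
    (hVo : ∀ i j, V i ⬝ᵥ V j = if i = j then 1 else 0)
    (s t : Finset (Fin n)) (c d : Fin n → ℝ) :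
    (∑ i ∈ s, c i • V i) ⬝ᵥ (∑ j ∈ t, d j • V j) = ∑ i ∈ s ∩ t, c i * d i := by
  rw [sum_dot', ← Finset.sum_ite_mem]
  refine Finset.sum_congr rfl fun i hi => ?_
  rw [smul_dotProduct, dot_sum']
  have : ∀ j ∈ t, V i ⬝ᵥ d j • V j = if j = i then d j else 0 := by
    intro j _
    rw [dotProduct_smul, hVo i j]
    by_cases h : i = j
    · subst h; simp
    · rw [if_neg h, if_neg (fun hh => h hh.symm)]; simp
  rw [Finset.sum_congr rfl this, Finset.sum_ite_eq' t i (fun j => d j)]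
  by_cases h : i ∈ t <;> simp [h, mul_comm]

lemma mulVec_sum_eig {n : ℕ} (A : Matrix (Fin n) (Fin n) ℝ) (V : Fin n → (Fin n → ℝ))
    (ν : Fin n → ℝ) (hVe : ∀ j, A *ᵥ V j = ν j • V j) (t : Finset (Fin n)) (d : Fin n → ℝ) :
    A *ᵥ (∑ j ∈ t, d j • V j) = ∑ j ∈ t, (ν j * d j) • V j := by
  have h1 : A *ᵥ (∑ j ∈ t, d j • V j) = ∑ j ∈ t, A *ᵥ (d j • V j) := by
    show A.mulVecLin _ = _
    rw [map_sum]
    rfl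
  rw [h1]
  refine Finset.sum_congr rfl fun j _ => ?_
  rw [Matrix.mulVec_smul, hVe j, smul_smul, mul_comm]

lemma dot_self_nonneg' {n : ℕ} (v : Fin n → ℝ) : 0 ≤ v ⬝ᵥ v :=
  Finset.sum_nonneg fun i _ => mul_self_nonneg _

lemma amgm' (a b t : ℝ) (ht : 0 < t) : 2 * (a * b) ≤ t * a ^ 2 + b ^ 2 / t := by
  rw [← sub_nonneg]
  have : t * a ^ 2 + b ^ 2 / t - 2 * (a * b) = (t * a - b) ^ 2 / t := by
    field_simp; ring
  rw [this]; positivity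

lemma cross_bound {n : ℕ} (A1 : Matrix (Fin n) (Fin n) ℝ) :
    ∃ M : ℝ, 0 < M ∧ ∀ t : ℝ, 0 < t → ∀ x y : Fin n → ℝ,
      2 * (x ⬝ᵥ A1 *ᵥ y) ≤ M * (t * (x ⬝ᵥ x) + (y ⬝ᵥ y) / t) := by
  classical
  set M : ℝ := (∑ i, ∑ j, |A1 i j|) + 1 with hM
  have htot : (0:ℝ) ≤ ∑ i', ∑ j', |A1 i' j'| :=
    Finset.sum_nonneg fun _ _ => Finset.sum_nonneg fun _ _ => abs_nonneg _
  have hrow : ∀ i, ∑ j, |A1 i j| ≤ M := by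
    intro i
    have h2 : ∑ j', |A1 i j'| ≤ ∑ i', ∑ j', |A1 i' j'| :=
      Finset.single_le_sum (f := fun i' => ∑ j', |A1 i' j'|)
        (fun k _ => Finset.sum_nonneg fun _ _ => abs_nonneg _) (Finset.mem_univ i)
    linarith
  have hcol : ∀ j, ∑ i, |A1 i j| ≤ M := by
    intro j
    have h2 : ∑ i', |A1 i' j| ≤ ∑ i', ∑ j', |A1 i' j'| :=
      Finset.sum_le_sum fun i' _ =>
        Finset.single_le_sum (f := fun j' => |A1 i' j'|)
          (fun k _ => abs_nonneg _) (Finset.mem_univ j)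
    linarith
  have hMpos : 0 < M := by linarith
  refine ⟨M, hMpos, fun t ht x y => ?_⟩
  have step1 : 2 * (x ⬝ᵥ A1 *ᵥ y) = ∑ i, ∑ j, 2 * (x i * (A1 i j * y j)) := by
    simp [dotProduct, mulVec, Finset.mul_sum]
  have step2 : ∀ i j, 2 * (x i * (A1 i j * y j)) ≤ |A1 i j| * (t * x i ^ 2 + y j ^ 2 / t) := by
    intro i j
    have h1 : 2 * (x i * (A1 i j * y j)) ≤ |A1 i j| * (2 * (|x i| * |y j|)) := by
      have h0 := le_abs_self (x i * (A1 i j * y j))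
      have h0' : 2 * (x i * (A1 i j * y j)) ≤ 2 * |x i * (A1 i j * y j)| := by linarith
      calc 2 * (x i * (A1 i j * y j)) ≤ 2 * |x i * (A1 i j * y j)| := h0'
        _ = |A1 i j| * (2 * (|x i| * |y j|)) := by rw [abs_mul, abs_mul]; ring
    have h2 : 2 * (|x i| * |y j|) ≤ t * |x i| ^ 2 + |y j| ^ 2 / t := amgm' _ _ _ ht
    have h3 : |A1 i j| * (2 * (|x i| * |y j|)) ≤ |A1 i j| * (t * |x i| ^ 2 + |y j| ^ 2 / t) :=
      mul_le_mul_of_nonneg_left h2 (abs_nonneg _)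
    rw [sq_abs, sq_abs] at h3
    linarith
  have step3 : ∑ i, ∑ j, 2 * (x i * (A1 i j * y j))
      ≤ ∑ i, ∑ j, |A1 i j| * (t * x i ^ 2 + y j ^ 2 / t) :=
    Finset.sum_le_sum fun i _ => Finset.sum_le_sum fun j _ => step2 i j
  have hxx : x ⬝ᵥ x = ∑ i, x i ^ 2 := by simp [dotProduct, sq]
  have hyy : y ⬝ᵥ y = ∑ j, y j ^ 2 := by simp [dotProduct, sq]
  have split : ∑ i, ∑ j, |A1 i j| * (t * x i ^ 2 + y j ^ 2 / t)
      = (∑ i, ∑ j, |A1 i j| * (t * x i ^ 2)) + ∑ i, ∑ j, |A1 i j| * (y j ^ 2 / t) := by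
    simp [mul_add, Finset.sum_add_distrib]
  have hA : (∑ i, ∑ j, |A1 i j| * (t * x i ^ 2)) ≤ M * (t * (x ⬝ᵥ x)) := by
    have e1 : ∀ i : Fin n, ∑ j, |A1 i j| * (t * x i ^ 2) = (∑ j, |A1 i j|) * (t * x i ^ 2) :=
      fun i => (Finset.sum_mul _ _ _).symm
    calc (∑ i, ∑ j, |A1 i j| * (t * x i ^ 2))
        = ∑ i, (∑ j, |A1 i j|) * (t * x i ^ 2) := Finset.sum_congr rfl fun i _ => e1 i
      _ ≤ ∑ i, M * (t * x i ^ 2) :=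
          Finset.sum_le_sum fun i _ =>
            mul_le_mul_of_nonneg_right (hrow i) (by positivity)
      _ = M * (t * (x ⬝ᵥ x)) := by
          rw [hxx, Finset.mul_sum, Finset.mul_sum]
  have hB : (∑ i, ∑ j, |A1 i j| * (y j ^ 2 / t)) ≤ M * ((y ⬝ᵥ y) / t) := by
    rw [Finset.sum_comm]
    have e1 : ∀ j : Fin n, ∑ i, |A1 i j| * (y j ^ 2 / t) = (∑ i, |A1 i j|) * (y j ^ 2 / t) :=
      fun j => (Finset.sum_mul _ _ _).symm
    calc (∑ j, ∑ i, |A1 i j| * (y j ^ 2 / t))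
        = ∑ j, (∑ i, |A1 i j|) * (y j ^ 2 / t) := Finset.sum_congr rfl fun j _ => e1 j
      _ ≤ ∑ j, M * (y j ^ 2 / t) :=
          Finset.sum_le_sum fun j _ =>
            mul_le_mul_of_nonneg_right (hcol j) (by positivity)
      _ = M * ((y ⬝ᵥ y) / t) := by
          rw [hyy, Finset.sum_div, Finset.mul_sum]
  calc 2 * (x ⬝ᵥ A1 *ᵥ y) = ∑ i, ∑ j, 2 * (x i * (A1 i j * y j)) := step1
    _ ≤ ∑ i, ∑ j, |A1 i j| * (t * x i ^ 2 + y j ^ 2 / t) := step3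
    _ = _ + _ := split
    _ ≤ M * (t * (x ⬝ᵥ x)) + M * ((y ⬝ᵥ y) / t) := add_le_add hA hB
    _ = M * (t * (x ⬝ᵥ x) + (y ⬝ᵥ y) / t) := by ring

lemma exists_beta {n : ℕ} (A0 A1 : Matrix (Fin n) (Fin n) ℝ)
    (hsing : A0.det = 0)
    (hpd : ∀ z : Fin n → ℝ, A0.mulVec z = 0 → z ≠ 0 → 0 < z ⬝ᵥ A1.mulVec z) :
    ∃ β : ℝ, 0 < β ∧ ∀ k : Fin n → ℝ, A0 *ᵥ k = 0 → β * (k ⬝ᵥ k) ≤ k ⬝ᵥ A1 *ᵥ k := by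
  classical
  obtain ⟨z₀, hz₀ne, hz₀⟩ := (Matrix.exists_mulVec_eq_zero_iff).mpr hsing
  set C : Set (Fin n → ℝ) := {k | A0 *ᵥ k = 0 ∧ k ⬝ᵥ k = 1} with hC
  have hcont0 : Continuous fun k : Fin n → ℝ => A0 *ᵥ k := by
    have : (fun k : Fin n → ℝ => A0 *ᵥ k) = fun k => A0.mulVecLin k := rfl
    rw [this]
    exact A0.mulVecLin.continuous_of_finiteDimensional
  have hcontd : ∀ B : Matrix (Fin n) (Fin n) ℝ, Continuous fun k : Fin n → ℝ => k ⬝ᵥ B *ᵥ k := by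
    intro B
    have : (fun k : Fin n → ℝ => k ⬝ᵥ B *ᵥ k)
        = fun k => ∑ i, k i * ∑ j, B i j * k j := rfl
    rw [this]
    refine continuous_finset_sum _ fun i _ => (continuous_apply i).mul ?_
    exact continuous_finset_sum _ fun j _ => continuous_const.mul (continuous_apply j)
  have hcontq : Continuous fun k : Fin n → ℝ => k ⬝ᵥ k := by
    have : (fun k : Fin n → ℝ => k ⬝ᵥ k) = fun k => ∑ i, k i * k i := rfl
    rw [this]
    exact continuous_finset_sum _ fun i _ => (continuous_apply i).mul (continuous_apply i)
  have hclosed : IsClosed C := by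
    refine IsClosed.inter ?_ ?_
    · exact isClosed_eq hcont0 continuous_const
    · exact isClosed_eq hcontq continuous_const
  have hsub : C ⊆ Metric.closedBall 0 1 := by
    intro k hk
    obtain ⟨-, hk1⟩ := hk
    rw [Metric.mem_closedBall, dist_zero_right]
    rw [pi_norm_le_iff_of_nonneg zero_le_one]
    intro i
    have h1 : k i * k i ≤ ∑ j, k j * k j :=
      Finset.single_le_sum (f := fun j => k j * k j) (fun j _ => mul_self_nonneg _)
        (Finset.mem_univ i)
    have h2 : k i * k i ≤ 1 := by
      have : (∑ j, k j * k j) = 1 := hk1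
      linarith
    rw [Real.norm_eq_abs, abs_le]
    constructor <;> nlinarith
  have hcompact : IsCompact C :=
    (isCompact_closedBall (0 : Fin n → ℝ) 1).of_isClosed_subset hclosed hsub
  have hCne : C.Nonempty := by
    have hpos : 0 < z₀ ⬝ᵥ z₀ := by
      rcases lt_or_eq_of_le (dot_self_nonneg' z₀) with h | h
      · exact h
      · exact absurd (dotProduct_self_eq_zero.mp h.symm) hz₀ne
    refine ⟨(Real.sqrt (z₀ ⬝ᵥ z₀))⁻¹ • z₀, ?_, ?_⟩
    · rw [Matrix.mulVec_smul, hz₀, smul_zero]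
    · rw [smul_dotProduct, dotProduct_smul, smul_eq_mul, smul_eq_mul]
      rw [← mul_assoc, ← mul_inv]
      rw [Real.mul_self_sqrt (le_of_lt hpos)]
      exact inv_mul_cancel₀ (ne_of_gt hpos)
  obtain ⟨k₀, hk₀C, hk₀min⟩ := hcompact.exists_isMinOn hCne ((hcontd A1).continuousOn)
  have hk₀ne : k₀ ≠ 0 := by
    intro h
    rw [h] at hk₀C
    simp [hC] at hk₀C
  set β := k₀ ⬝ᵥ A1 *ᵥ k₀ with hβdef
  have hβ : 0 < β := hpd k₀ hk₀C.1 hk₀ne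
  refine ⟨β, hβ, fun k hk => ?_⟩
  by_cases hkz : k = 0
  · subst hkz; simp
  · have hpos : 0 < k ⬝ᵥ k := by
      rcases lt_or_eq_of_le (dot_self_nonneg' k) with h | h
      · exact h
      · exact absurd (dotProduct_self_eq_zero.mp h.symm) hkz
    set u : Fin n → ℝ := (Real.sqrt (k ⬝ᵥ k))⁻¹ • k with hu
    have huC : u ∈ C := by
      constructor
      · rw [hu, Matrix.mulVec_smul, hk, smul_zero]
      · rw [hu, smul_dotProduct, dotProduct_smul, smul_eq_mul, smul_eq_mul]
        rw [← mul_assoc, ← mul_inv, Real.mul_self_sqrt (le_of_lt hpos)]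
        exact inv_mul_cancel₀ (ne_of_gt hpos)
    have hmin : β ≤ u ⬝ᵥ A1 *ᵥ u := hk₀min huC
    have hval : u ⬝ᵥ A1 *ᵥ u = (k ⬝ᵥ k)⁻¹ * (k ⬝ᵥ A1 *ᵥ k) := by
      rw [hu, Matrix.mulVec_smul, smul_dotProduct, dotProduct_smul,
        smul_eq_mul, smul_eq_mul, ← mul_assoc, ← mul_inv,
        Real.mul_self_sqrt (le_of_lt hpos)]
    rw [hval] at hmin
    rw [← sub_nonneg]
    have h2 : β * (k ⬝ᵥ k) ≤ (k ⬝ᵥ k)⁻¹ * (k ⬝ᵥ A1 *ᵥ k) * (k ⬝ᵥ k) :=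
      mul_le_mul_of_nonneg_right hmin (le_of_lt hpos)
    rw [mul_comm ((k ⬝ᵥ k)⁻¹) _, mul_assoc, inv_mul_cancel₀ (ne_of_gt hpos), mul_one] at h2
    linarith

end aux

set_option maxHeartbeats 1000000

theorem stmt_7 (n : ℕ) (A0 A1 : Matrix (Fin n) (Fin n) ℝ)
    (hA0 : A0.IsHermitian) (hA1 : A1.IsHermitian)
    (hA0pos : 0 < (Finset.univ.filter fun i => 0 < hA0.eigenvalues i).card)
    (hA0neg : (Finset.univ.filter fun i => hA0.eigenvalues i < 0).card = 1)
    (xbar : Fin n → ℝ)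
    (h0 : xbar ⬝ᵥ A0.mulVec xbar < 0) (h1 : xbar ⬝ᵥ A1.mulVec xbar < 0)
    (hsing : A0.det = 0)
    (hpd : ∀ z : Fin n → ℝ, A0.mulVec z = 0 → z ≠ 0 → 0 < z ⬝ᵥ A1.mulVec z) :
    ∃ ε0 : ℝ, 0 < ε0 ∧ ∀ ε : ℝ, 0 < ε → ε < ε0 →
      IsUnit ((1 - ε) • A0 + ε • A1).det ∧
      ∀ h : ((1 - ε) • A0 + ε • A1).IsHermitian,
        (Finset.univ.filter fun i => h.eigenvalues i < 0).card = 1 := by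
  classical
  set lam := hA0.eigenvalues with hlam
  set V : Fin n → (Fin n → ℝ) := fun i => ⇑(hA0.eigenvectorBasis i) with hV
  have hVo : ∀ i j, V i ⬝ᵥ V j = if i = j then 1 else 0 := by
    intro i j
    have h := orthonormal_iff_ite.mp hA0.eigenvectorBasis.orthonormal i j
    rw [hV]
    rw [← h, real_inner_comm]
    simp [PiLp.inner_apply, dotProduct, mul_comm]
  have hVe : ∀ j, A0 *ᵥ V j = lam j • V j := fun j => hA0.mulVec_eigenvectorBasis j
  set N : Finset (Fin n) := Finset.univ.filter fun i => lam i < 0 with hN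
  set P : Finset (Fin n) := Finset.univ.filter fun i => 0 < lam i with hP
  set Z : Finset (Fin n) := Finset.univ.filter fun i => lam i = 0 with hZ
  set S : Finset (Fin n) := Finset.univ.filter fun i => 0 ≤ lam i with hS
  have hPZ : Disjoint P Z := by
    rw [Finset.disjoint_left]
    intro a haP haZ
    rw [hP, Finset.mem_filter] at haP
    rw [hZ, Finset.mem_filter] at haZ
    exact absurd haZ.2 (ne_of_gt haP.2)
  have hPZS : P ∪ Z = S := by
    ext i
    rw [Finset.mem_union, hP, hZ, hS]
    simp only [Finset.mem_filter, Finset.mem_univ, true_and]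
    constructor
    · rintro (h | h)
      · exact le_of_lt h
      · exact le_of_eq h.symm
    · intro h
      rcases lt_or_eq_of_le h with h' | h'
      · exact Or.inl h'
      · exact Or.inr h'.symm
  have hcardSN : S.card + 1 = n := by
    have := Finset.card_filter_add_card_filter_not
      (s := (Finset.univ : Finset (Fin n))) (p := fun i => 0 ≤ lam i)
    simp only [not_le] at this
    rw [← hS] at this
    have h2 : (Finset.univ.filter fun i => lam i < 0) = N := rfl
    rw [h2, hA0neg, Finset.card_univ, Fintype.card_fin] at this
    exact this
  have hPne : P.Nonempty := Finset.card_pos.mp hA0pos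
  set α := P.inf' hPne lam with hα
  have hαpos : 0 < α := by
    rw [hα, Finset.lt_inf'_iff]
    intro i hi
    rw [hP, Finset.mem_filter] at hi
    exact hi.2
  have hαle : ∀ i ∈ P, α ≤ lam i := fun i hi => Finset.inf'_le _ hi
  obtain ⟨M, hMpos, hMbound⟩ := cross_bound A1
  obtain ⟨β, hβpos, hβbound⟩ := exists_beta A0 A1 hsing hpd
  set C : ℝ := M + 2 * M ^ 2 / β with hC
  have hCpos : 0 < C := by positivity
  refine ⟨α / (α + C), by positivity, fun ε hεpos hεlt => ?_⟩
  have hεsmall : ε * (α + C) < α := by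
    rw [← lt_div_iff₀ (by positivity)]
    exact hεlt
  have hε1 : ε < 1 := by nlinarith
  set B : Matrix (Fin n) (Fin n) ℝ := (1 - ε) • A0 + ε • A1 with hBdef
  have hB : B.IsHermitian := by
    rw [Matrix.IsHermitian, hBdef, Matrix.conjTranspose_add, Matrix.conjTranspose_smul,
      Matrix.conjTranspose_smul, hA0.eq, hA1.eq]
    simp
  -- key positivity on the span of nonnegative eigenvectors
  have keypos : ∀ cc : Fin n → ℝ, (∑ i ∈ S, cc i • V i) ≠ 0 →
      0 < (∑ i ∈ S, cc i • V i) ⬝ᵥ B *ᵥ (∑ i ∈ S, cc i • V i) := by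
    intro cc hzne
    set z : Fin n → ℝ := ∑ i ∈ S, cc i • V i with hz
    set p : Fin n → ℝ := ∑ i ∈ P, cc i • V i with hp
    set k : Fin n → ℝ := ∑ i ∈ Z, cc i • V i with hk
    have hzpk : z = p + k := by
      rw [hz, hp, hk, ← Finset.sum_union hPZ, hPZS]
    set pp : ℝ := p ⬝ᵥ p with hpp
    set kk : ℝ := k ⬝ᵥ k with hkk
    have hppv : pp = ∑ i ∈ P, cc i * cc i := by
      rw [hpp, hp, dot_expand' V hVo, Finset.inter_self]
    have hkkv : kk = ∑ i ∈ Z, cc i * cc i := by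
      rw [hkk, hk, dot_expand' V hVo, Finset.inter_self]
    have hppnn : 0 ≤ pp := dot_self_nonneg' p
    have hkknn : 0 ≤ kk := dot_self_nonneg' k
    have hpk0 : p ⬝ᵥ k = 0 := by
      rw [hp, hk, dot_expand' V hVo, (Finset.disjoint_iff_inter_eq_empty.mp hPZ)]
      simp
    have hkp0 : k ⬝ᵥ p = 0 := by
      rw [hk, hp, dot_expand' V hVo, (Finset.disjoint_iff_inter_eq_empty.mp hPZ.symm)]
      simp
    have hzz : z ⬝ᵥ z = pp + kk := by
      rw [hzpk, add_dotProduct, dotProduct_add, dotProduct_add, hpk0, hkp0, hpp, hkk]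
      ring
    have hzzpos : 0 < pp + kk := by
      rw [← hzz]
      rcases lt_or_eq_of_le (dot_self_nonneg' z) with h | h
      · exact h
      · exact absurd (dotProduct_self_eq_zero.mp h.symm) hzne
    -- A0 part
    have hq0 : z ⬝ᵥ A0 *ᵥ z = ∑ i ∈ S, cc i * (lam i * cc i) := by
      rw [hz, mulVec_sum_eig A0 V lam hVe, dot_expand' V hVo, Finset.inter_self]
    have hq0ge : α * pp ≤ z ⬝ᵥ A0 *ᵥ z := by
      rw [hq0, ← hPZS, Finset.sum_union hPZ]
      have hZ0 : ∑ i ∈ Z, cc i * (lam i * cc i) = 0 := by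
        refine Finset.sum_eq_zero fun i hi => ?_
        rw [hZ, Finset.mem_filter] at hi
        rw [hi.2]; ring
      rw [hZ0, add_zero, hppv, Finset.mul_sum]
      refine Finset.sum_le_sum fun i hi => ?_
      have h1 := hαle i hi
      nlinarith [mul_self_nonneg (cc i)]
    -- A0 kills k
    have hA0k : A0 *ᵥ k = 0 := by
      rw [hk, mulVec_sum_eig A0 V lam hVe]
      refine Finset.sum_eq_zero fun i hi => ?_
      rw [hZ, Finset.mem_filter] at hi
      rw [hi.2, zero_mul, zero_smul]
    -- A1 part
    have ht0 : (0:ℝ) < 2 * M / β := by positivity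
    have ht1 : (0:ℝ) < β / (2 * M) := by positivity
    have hcross1 : -((M ^ 2 / β) * pp + (β / 4) * kk) ≤ p ⬝ᵥ A1 *ᵥ k := by
      have h := hMbound (2 * M / β) ht0 (-p) k
      rw [neg_dotProduct] at h
      have harith : M * ((2 * M / β) * ((-1 : ℝ) * -pp) + kk / (2 * M / β))
          = 2 * ((M ^ 2 / β) * pp + (β / 4) * kk) := by
        field_simp
        ring
      have hppe : (-p) ⬝ᵥ (-p) = pp := by rw [neg_dotProduct, dotProduct_neg, hpp]; ring
      rw [hppe] at h
      have : M * (2 * M / β * pp + kk / (2 * M / β)) = 2 * (M ^ 2 / β * pp + β / 4 * kk) := by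
        field_simp
        ring
      rw [this] at h
      linarith
    have hcross2 : -((β / 4) * kk + (M ^ 2 / β) * pp) ≤ k ⬝ᵥ A1 *ᵥ p := by
      have h := hMbound (β / (2 * M)) ht1 (-k) p
      rw [neg_dotProduct] at h
      have hkke : (-k) ⬝ᵥ (-k) = kk := by rw [neg_dotProduct, dotProduct_neg, hkk]; ring
      rw [hkke] at h
      have : M * (β / (2 * M) * kk + pp / (β / (2 * M)))
          = 2 * ((β / 4) * kk + (M ^ 2 / β) * pp) := by
        field_simp
        ring
      rw [this] at h
      linarith
    have hself : -(M * pp) ≤ p ⬝ᵥ A1 *ᵥ p := by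
      have h := hMbound 1 one_pos (-p) p
      rw [neg_dotProduct] at h
      have hppe : (-p) ⬝ᵥ (-p) = pp := by rw [neg_dotProduct, dotProduct_neg, hpp]; ring
      rw [hppe] at h
      have : M * (1 * pp + pp / 1) = 2 * (M * pp) := by ring
      rw [this] at h
      linarith
    have hkbeta : β * kk ≤ k ⬝ᵥ A1 *ᵥ k := hβbound k hA0k
    have hq1ge : -(C * pp) + (β / 2) * kk ≤ z ⬝ᵥ A1 *ᵥ z := by
      have hsplit : z ⬝ᵥ A1 *ᵥ z
          = p ⬝ᵥ A1 *ᵥ p + p ⬝ᵥ A1 *ᵥ k + k ⬝ᵥ A1 *ᵥ p + k ⬝ᵥ A1 *ᵥ k := by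
        rw [hzpk, Matrix.mulVec_add, add_dotProduct, dotProduct_add, dotProduct_add]
        ring
      rw [hsplit, hC]
      have e1 : (M + 2 * M ^ 2 / β) * pp = M * pp + 2 * (M ^ 2 / β * pp) := by ring
      have e2 : (β / 2) * kk = β * kk - 2 * (β / 4 * kk) := by ring
      linarith
    -- combine
    have hqz : z ⬝ᵥ B *ᵥ z = (1 - ε) * (z ⬝ᵥ A0 *ᵥ z) + ε * (z ⬝ᵥ A1 *ᵥ z) := by
      rw [hBdef, Matrix.add_mulVec, Matrix.smul_mulVec, Matrix.smul_mulVec,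
        dotProduct_add, dotProduct_smul, dotProduct_smul, smul_eq_mul, smul_eq_mul]
    rw [hqz]
    have hcoef : 0 < (1 - ε) * α - ε * C := by nlinarith
    have key1 : 0 < ((1 - ε) * α - ε * C) * pp + (ε * (β / 2)) * kk := by
      rcases lt_or_eq_of_le hppnn with hp' | hp'
      · have t1 : 0 < ((1 - ε) * α - ε * C) * pp := mul_pos hcoef hp'
        have t2 : 0 ≤ (ε * (β / 2)) * kk := mul_nonneg (by positivity) hkknn
        exact add_pos_of_pos_of_nonneg t1 t2
      · have hkkpos : 0 < kk := by linarith
        have t2 : 0 < (ε * (β / 2)) * kk := mul_pos (by positivity) hkkpos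
        have t1 : ((1 - ε) * α - ε * C) * pp = 0 := by rw [← hp', mul_zero]
        rw [t1, zero_add]
        exact t2
    have e3 : (1 - ε) * (α * pp) + ε * (-(C * pp) + (β / 2) * kk)
        = ((1 - ε) * α - ε * C) * pp + (ε * (β / 2)) * kk := by ring
    have m1 := mul_le_mul_of_nonneg_left hq0ge (by linarith : (0:ℝ) ≤ 1 - ε)
    have m2 := mul_le_mul_of_nonneg_left hq1ge (le_of_lt hεpos)
    linarith
  -- the span of nonnegative eigenvectors as a submodule
  have hforth : Orthonormal ℝ (fun i : {i // i ∈ S} => hA0.eigenvectorBasis i.1) :=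
    hA0.eigenvectorBasis.orthonormal.comp _ Subtype.val_injective
  set W : Submodule ℝ (EuclideanSpace ℝ (Fin n)) :=
    Submodule.span ℝ (Set.range fun i : {i // i ∈ S} => hA0.eigenvectorBasis i.1) with hW
  have hdimW : Module.finrank ℝ W = S.card := by
    rw [hW, finrank_span_eq_card hforth.linearIndependent]
    exact Fintype.card_coe S
  have hmemW : ∀ z : EuclideanSpace ℝ (Fin n), z ∈ W → ∃ cc : Fin n → ℝ,
      (z : Fin n → ℝ) = ∑ i ∈ S, cc i • V i := by
    intro z hz
    rw [hW, Submodule.mem_span_range_iff_exists_fun] at hz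
    obtain ⟨c, hc⟩ := hz
    refine ⟨fun i => if h : i ∈ S then c ⟨i, h⟩ else 0, ?_⟩
    have h2 : ∑ i : {i // i ∈ S}, c i • (V i.1 : Fin n → ℝ)
        = ∑ i : {i // i ∈ S}, (if h : i.1 ∈ S then c ⟨i.1, h⟩ else 0) • V i.1 := by
      refine Finset.sum_congr rfl fun i _ => ?_
      rw [dif_pos i.2]
    have h3 := Finset.sum_coe_sort S (fun i => (if h : i ∈ S then c ⟨i, h⟩ else 0) • V i)
    calc (z : Fin n → ℝ) = ∑ i : {i // i ∈ S}, c i • (V i.1 : Fin n → ℝ) := by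
          rw [← hc, hV]; simp
      _ = ∑ i : {i // i ∈ S}, (if h : i.1 ∈ S then c ⟨i.1, h⟩ else 0) • V i.1 := h2
      _ = ∑ i ∈ S, (if h : i ∈ S then c ⟨i, h⟩ else 0) • V i := h3
  -- at most one nonpositive eigenvalue of B
  have hcount : (Finset.univ.filter fun i => hB.eigenvalues i ≤ 0).card ≤ 1 := by
    by_contra hcon
    rw [not_le] at hcon
    obtain ⟨i, hi, j, hj, hij⟩ := Finset.one_lt_card.mp hcon
    rw [Finset.mem_filter] at hi hj
    set w : Fin n → (Fin n → ℝ) := fun m => ⇑(hB.eigenvectorBasis m) with hw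
    have hwo : ∀ a b, w a ⬝ᵥ w b = if a = b then 1 else 0 := by
      intro a b
      have h := orthonormal_iff_ite.mp hB.eigenvectorBasis.orthonormal a b
      rw [hw, ← h, real_inner_comm]
      simp [PiLp.inner_apply, dotProduct, mul_comm]
    have hwe : ∀ a, B *ᵥ w a = hB.eigenvalues a • w a := fun a =>
      hB.mulVec_eigenvectorBasis a
    have hginj : Function.Injective (![i, j] : Fin 2 → Fin n) := by
      intro a b hab
      fin_cases a <;> fin_cases b <;> simp_all
    have hgo : Orthonormal ℝ (fun m : Fin 2 => hB.eigenvectorBasis (![i, j] m)) :=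
      hB.eigenvectorBasis.orthonormal.comp _ hginj
    set U : Submodule ℝ (EuclideanSpace ℝ (Fin n)) :=
      Submodule.span ℝ (Set.range fun m : Fin 2 => hB.eigenvectorBasis (![i, j] m)) with hU
    have hdimU : Module.finrank ℝ U = 2 := by
      rw [hU, finrank_span_eq_card hgo.linearIndependent]
      simp
    have hsupB : Module.finrank ℝ ↥(U ⊔ W) ≤ n := by
      have h := Submodule.finrank_le (U ⊔ W)
      rwa [finrank_euclideanSpace, Fintype.card_fin] at h
    have hinf : 0 < Module.finrank ℝ ↥(U ⊓ W) := by
      have heq := Submodule.finrank_sup_add_finrank_inf_eq U W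
      rw [hdimU, hdimW] at heq
      omega
    have hUWne : U ⊓ W ≠ ⊥ := by
      intro hbot
      rw [hbot] at hinf
      simp at hinf
    obtain ⟨z, hzUW, hzne⟩ := Submodule.exists_mem_ne_zero_of_ne_bot hUWne
    have hzU : z ∈ U := (Submodule.mem_inf.mp hzUW).1
    have hzW : z ∈ W := (Submodule.mem_inf.mp hzUW).2
    obtain ⟨cc, hcc⟩ := hmemW z hzW
    have hzne' : (∑ i ∈ S, cc i • V i) ≠ 0 := by
      rw [← hcc]
      exact fun h => hzne (by simpa using h)
    have hposz := keypos cc hzne'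
    rw [← hcc] at hposz
    -- z is in the span of two nonpositive eigenvectors
    rw [hU, Submodule.mem_span_range_iff_exists_fun] at hzU
    obtain ⟨d, hd⟩ := hzU
    have hdz : (z : Fin n → ℝ) = d 0 • w i + d 1 • w j := by
      rw [← hd, Fin.sum_univ_two]
      rfl
    have hqle : (z : Fin n → ℝ) ⬝ᵥ B *ᵥ (z : Fin n → ℝ) ≤ 0 := by
      rw [hdz, Matrix.mulVec_add, Matrix.mulVec_smul, Matrix.mulVec_smul, hwe i, hwe j]
      simp only [dotProduct_add, add_dotProduct, smul_dotProduct, dotProduct_smul,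
        smul_eq_mul]
      rw [hwo i i, hwo i j, hwo j i, hwo j j]
      rw [if_pos rfl, if_pos rfl, if_neg hij, if_neg (Ne.symm hij)]
      simp only [smul_eq_mul, mul_zero, mul_one, zero_add, add_zero]
      nlinarith [hi.2, hj.2, mul_self_nonneg (d 0), mul_self_nonneg (d 1)]
    linarith
  -- B has a negative eigenvalue
  have hxbar : xbar ⬝ᵥ B *ᵥ xbar < 0 := by
    have he : xbar ⬝ᵥ B *ᵥ xbar
        = (1 - ε) * (xbar ⬝ᵥ A0 *ᵥ xbar) + ε * (xbar ⬝ᵥ A1 *ᵥ xbar) := by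
      rw [hBdef, Matrix.add_mulVec, Matrix.smul_mulVec, Matrix.smul_mulVec,
        dotProduct_add, dotProduct_smul, dotProduct_smul, smul_eq_mul, smul_eq_mul]
    rw [he]
    nlinarith
  have hexneg : ∃ i, hB.eigenvalues i < 0 := by
    by_contra hcon
    push_neg at hcon
    have hps := hB.posSemidef_iff_eigenvalues_nonneg.mpr (fun i => hcon i)
    have h2 := hps.dotProduct_mulVec_nonneg xbar
    simp only [RCLike.re_to_real, star_trivial] at h2
    have h3 : (0:ℝ) ≤ xbar ⬝ᵥ B *ᵥ xbar := by simpa using h2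
    linarith
  have hone : (Finset.univ.filter fun i => hB.eigenvalues i < 0).card = 1 := by
    obtain ⟨i0, hi0⟩ := hexneg
    have hsubset : (Finset.univ.filter fun i => hB.eigenvalues i < 0)
        ⊆ (Finset.univ.filter fun i => hB.eigenvalues i ≤ 0) :=
      by
        intro a ha
        rw [Finset.mem_filter] at *
        exact ⟨ha.1, le_of_lt ha.2⟩
    have h1le : 1 ≤ (Finset.univ.filter fun i => hB.eigenvalues i < 0).card :=
      Finset.card_pos.mpr ⟨i0, Finset.mem_filter.mpr ⟨Finset.mem_univ _, hi0⟩⟩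
    have h2le := Finset.card_le_card hsubset
    omega
  have hnz : ∀ i, hB.eigenvalues i ≠ 0 := by
    intro i0 hi0
    have hi0notin : i0 ∉ (Finset.univ.filter fun i => hB.eigenvalues i < 0) := by
      simp [hi0]
    have hsub2 : insert i0 (Finset.univ.filter fun i => hB.eigenvalues i < 0)
        ⊆ (Finset.univ.filter fun i => hB.eigenvalues i ≤ 0) := by
      intro a ha
      rcases Finset.mem_insert.mp ha with h | h
      · subst h
        exact Finset.mem_filter.mpr ⟨Finset.mem_univ _, le_of_eq hi0⟩
      · exact Finset.mem_filter.mpr ⟨Finset.mem_univ _,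
          le_of_lt (Finset.mem_filter.mp h).2⟩
    have hcard2 := Finset.card_le_card hsub2
    rw [Finset.card_insert_of_notMem hi0notin, hone] at hcard2
    omega
  refine ⟨?_, ?_⟩
  · rw [hB.det_eq_prod_eigenvalues, isUnit_iff_ne_zero, Finset.prod_ne_zero_iff]
    intro i _
    simpa using hnz i
  · intro h
    exact hone
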